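/- Let n be even, let J be an invertible skew-symmetric n×n matrix over 𝔽, and let A be a nonzero skew-symmetric n×n matrix with trace(J·A) = 0. Then there exist vectors u, v ∈ 𝔽ⁿ such that uᵀ A v ≠ 0 and (A u)ᵀ J (A v) = 0. -/

import Mathlib

open Matrix

/-- If every vector orthogonal to `x` is orthogonal to `y`, then `y` is a multiple of `x`. -/
lemma aux_span {n : ℕ} {F : Type*} [Field F] (x y : Fin n → F)
    (h : ∀ v : Fin n → F, x ⬝ᵥ v = 0 → y ⬝ᵥ v = 0) : ∃ c : F, y = c • x := by
  by_cases hx : x = 0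
  · refine ⟨0, ?_⟩
    funext j
    have := h (Pi.single j (1:F)) (by rw [hx]; simp)
    simpa [dotProduct_single] using this
  · obtain ⟨i, hi⟩ := Function.ne_iff.mp hx
    refine ⟨y i / x i, ?_⟩
    funext j
    have hv : x ⬝ᵥ (x i • (Pi.single j 1 : Fin n → F) - x j • (Pi.single i 1 : Fin n → F)) = 0 := by
      simp [dotProduct_sub, dotProduct_smul, dotProduct_single]
      ring
    have hy := h _ hv
    simp only [dotProduct_sub, dotProduct_smul, dotProduct_single, smul_eq_mul, mul_one,
      sub_eq_zero] at hy
    have hxi : x i ≠ 0 := by simpa using hi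
    rw [Pi.smul_apply, smul_eq_mul, div_mul_eq_mul_div, eq_div_iff hxi]
    linear_combination hy

/-- An idempotent matrix with zero trace over a char-zero field is zero. -/
lemma idem_trace_zero {n : ℕ} {F : Type*} [Field F] [CharZero F]
    (P : Matrix (Fin n) (Fin n) F) (hP : P * P = P) (ht : trace P = 0) : P = 0 := by
  set f : (Fin n → F) →ₗ[F] (Fin n → F) := Matrix.mulVecLin P with hf
  have hff : f ∘ₗ f = f := by
    rw [hf, ← Matrix.mulVecLin_mul, hP]
  obtain ⟨p, hp⟩ := (LinearMap.isProj_iff_isIdempotentElem f).mpr hff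
  have htr : LinearMap.trace F (Fin n → F) f = (Module.finrank F p : F) := hp.trace
  have htrP : LinearMap.trace F (Fin n → F) f = trace P := by
    rw [LinearMap.trace_eq_matrix_trace F (Pi.basisFun F (Fin n)),
      LinearMap.toMatrix_eq_toMatrix']
    congr 1
    rw [hf, ← Matrix.toLin'_apply', LinearMap.toMatrix'_toLin']
  have hzero : (Module.finrank F p : F) = 0 := by rw [← htr, htrP, ht]
  have hfin : Module.finrank F p = 0 := by exact_mod_cast hzero
  have hbot : p = ⊥ := Submodule.finrank_eq_zero.mp hfin
  have : ∀ u, f u = 0 := by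
    intro u
    have := hp.map_mem u
    rw [hbot] at this
    simpa using this
  ext i j
  have := congrFun (this (Pi.single j 1)) i
  simpa [hf] using this

/-- Let `n` be even, `J` an invertible skew-symmetric `n×n` matrix, and `A` a
nonzero skew-symmetric `n×n` matrix with `trace(J·A) = 0`. Then there exist vectors
`u, v ∈ 𝔽ⁿ` with `uᵀ A v ≠ 0` and `(A u)ᵀ J (A v) = 0`. -/
theorem stmt_9 (F : Type*) [Field F] [CharZero F] [IsAlgClosed F]
    (n : ℕ) (hn : Even n) (J A : Matrix (Fin n) (Fin n) F)
    (hJskew : Jᵀ = -J) (hJinv : IsUnit J)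
    (hAskew : Aᵀ = -A) (hA : A ≠ 0) (htr : trace (J * A) = 0) :
    ∃ u v : Fin n → F,
      u ⬝ᵥ (A *ᵥ v) ≠ 0 ∧ (A *ᵥ u) ⬝ᵥ (J *ᵥ (A *ᵥ v)) = 0 := by
  set B : Matrix (Fin n) (Fin n) F := A * J * A with hBdef
  -- key identity: (A u)ᵀ J (A v) = -(uᵀ B v)
  have key : ∀ u v : Fin n → F, (A *ᵥ u) ⬝ᵥ (J *ᵥ (A *ᵥ v)) = -(u ⬝ᵥ (B *ᵥ v)) := by
    intro u v
    rw [dotProduct_mulVec, ← vecMul_transpose, hAskew, dotProduct_mulVec,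
      vecMul_vecMul, dotProduct_mulVec, hBdef]
    simp [Matrix.neg_mul, Matrix.mul_assoc, Matrix.vecMul_neg, neg_dotProduct, Matrix.neg_vecMul, Matrix.vecMul_vecMul]
  by_contra hcon
  push_neg at hcon
  -- H : orthogonality for B implies orthogonality for A
  have H : ∀ u v : Fin n → F, u ⬝ᵥ (B *ᵥ v) = 0 → u ⬝ᵥ (A *ᵥ v) = 0 := by
    intro u v hBv
    by_contra hAv
    have := hcon u v hAv
    rw [key u v, hBv] at this
    simp at this
  -- B is skew
  have hBskew : Bᵀ = -B := by
    rw [hBdef, Matrix.transpose_mul, Matrix.transpose_mul, hAskew, hJskew]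
    simp [Matrix.mul_assoc]
  -- for each u, A u is a multiple of B u
  have hmul : ∀ u : Fin n → F, ∃ c : F, A *ᵥ u = c • (B *ᵥ u) := by
    intro u
    apply aux_span
    intro v hv
    -- (B u) ⬝ v = 0 means u ⬝ (B v) = 0 (up to sign), similarly for A
    have h1 : u ⬝ᵥ (B *ᵥ v) = 0 := by
      have : u ⬝ᵥ (B *ᵥ v) = -((B *ᵥ u) ⬝ᵥ v) := by
        rw [dotProduct_mulVec, ← vecMul_transpose, hBskew]
        simp [neg_mulVec, dotProduct_comm, Matrix.vecMul_neg, dotProduct_neg]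
      rw [this, hv, neg_zero]
    have h2 := H u v h1
    have : u ⬝ᵥ (A *ᵥ v) = -((A *ᵥ u) ⬝ᵥ v) := by
      rw [dotProduct_mulVec, ← vecMul_transpose, hAskew]
      simp [neg_mulVec, dotProduct_comm, Matrix.vecMul_neg, dotProduct_neg]
    rw [this] at h2
    exact neg_eq_zero.mp h2
  -- A = 0 would follow if all A *ᵥ u = 0
  have hAne : ∃ u : Fin n → F, A *ᵥ u ≠ 0 := by
    by_contra h
    push_neg at h
    apply hA
    ext i j
    have := congrFun (h (Pi.single j 1)) i
    simpa using this
  -- case B = 0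
  by_cases hB0 : ∀ u : Fin n → F, B *ᵥ u = 0
  · obtain ⟨u, hu⟩ := hAne
    obtain ⟨c, hc⟩ := hmul u
    rw [hB0 u, smul_zero] at hc
    exact hu hc
  -- case B ≠ 0
  push_neg at hB0
  obtain ⟨u0, hu0⟩ := hB0
  obtain ⟨c, hc0⟩ := hmul u0
  -- claim: A *ᵥ u = c • (B *ᵥ u) for all u
  have hker : ∀ u : Fin n → F, B *ᵥ u = 0 → A *ᵥ u = 0 := by
    intro u hu
    obtain ⟨d, hd⟩ := hmul u
    rw [hu, smul_zero] at hd
    exact hd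
  have hAll : ∀ u : Fin n → F, A *ᵥ u = c • (B *ᵥ u) := by
    intro u
    by_cases hspan : ∃ μ : F, B *ᵥ u = μ • (B *ᵥ u0)
    · obtain ⟨μ, hμ⟩ := hspan
      have hz : B *ᵥ (u - μ • u0) = 0 := by
        rw [Matrix.mulVec_sub, Matrix.mulVec_smul, hμ, sub_self]
      have hz2 := hker _ hz
      rw [Matrix.mulVec_sub, Matrix.mulVec_smul, sub_eq_zero] at hz2
      rw [hz2, hc0, hμ, smul_smul, smul_smul, mul_comm]
    · push_neg at hspan
      obtain ⟨lu, hlu⟩ := hmul u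
      obtain ⟨l', hl'⟩ := hmul (u0 + u)
      rw [Matrix.mulVec_add, Matrix.mulVec_add, hc0, hlu, smul_add] at hl'
      -- c • Bu0 + lu • Bu = l' • Bu0 + l' • Bu
      have heq : (lu - l') • (B *ᵥ u) = (l' - c) • (B *ᵥ u0) := by
        funext i
        have h1 := congrFun hl' i
        simp only [Pi.add_apply, Pi.smul_apply, smul_eq_mul] at h1 ⊢
        linear_combination h1
      by_cases hlul : lu = l'
      · have h0 : (l' - c) • (B *ᵥ u0) = 0 := by
          rw [← heq, hlul, sub_self, zero_smul]
        rcases smul_eq_zero.mp h0 with h | h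
        · have hl'c : l' = c := sub_eq_zero.mp h
          rw [hlu, hlul, hl'c]
        · exact absurd h hu0
      · exfalso
        apply hspan ((l' - c) / (lu - l'))
        have hne : lu - l' ≠ 0 := sub_ne_zero.mpr hlul
        rw [div_eq_mul_inv, mul_comm, ← smul_smul]
        rw [← heq, smul_smul, inv_mul_cancel₀ hne, one_smul]
  -- hence A = c • B
  have hAB : A = c • B := by
    ext i j
    have := congrFun (hAll (Pi.single j 1)) i
    simpa using this
  have hcne : c ≠ 0 := by
    intro h
    rw [h, zero_smul] at hAB
    exact hA hAB
  -- now J * A = c • (J*A)*(J*A)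
  set M : Matrix (Fin n) (Fin n) F := J * A with hMdef
  have hM : M = c • (M * M) := by
    rw [hMdef]
    nth_rewrite 1 [hAB]
    rw [hBdef]
    rw [Matrix.mul_smul]
    congr 1
    rw [Matrix.mul_assoc, Matrix.mul_assoc]
  -- P = c • M is idempotent with zero trace
  have hPidem : (c • M) * (c • M) = c • M := by
    rw [Matrix.smul_mul, Matrix.mul_smul, smul_smul]
    nth_rewrite 3 [hM]
    rw [smul_smul, mul_comm]
  have hPtr : trace (c • M) = 0 := by
    rw [trace_smul, hMdef, htr, smul_zero]
  have hP0 := idem_trace_zero (c • M) hPidem hPtr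
  have hM0 : M = 0 := by
    have := hP0
    rw [smul_eq_zero] at this
    rcases this with h | h
    · exact absurd h hcne
    · exact h
  -- but M = J * A ≠ 0 since J invertible and A ≠ 0
  apply hA
  have hdet : IsUnit J.det := (Matrix.isUnit_iff_isUnit_det J).mp hJinv
  calc A = J⁻¹ * (J * A) := by rw [← Matrix.mul_assoc, Matrix.nonsing_inv_mul J hdet, Matrix.one_mul]
    _ = 0 := by rw [← hMdef, hM0, Matrix.mul_zero]
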